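/- Let E and R be commutative associative algebras over a field F such that E is finite-dimensional étale over F. If the quadratic Jordan algebra structures E⁺ and R⁺ coincide (i.e., E and R have the same underlying vector space, the same unit, and x²y computed in E equals x²y computed in R for all x, y), then E = R as commutative associative algebras. -/

import Mathlib

open scoped TensorProduct

set_option synthInstance.maxHeartbeats 1000000 in
/-- Let `E` and `R` be commutative associative algebras over a field `F` with the
same underlying vector space (here: the same type `A`, with the same addition, scalar action and
the same unit `1`), such that `E` is finite-dimensional étale over `F`.  `E` is the algebra given
by the ambient `CommRing`/`Algebra` structure and `R` is given by a second multiplication `mul'`.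
If the quadratic Jordan structures `E⁺` and `R⁺` coincide, i.e. `x² y` computed in `E` equals
`x² y` computed in `R` for all `x y`, then `E = R` as commutative associative algebras, i.e. the
two multiplications coincide. -/
theorem stmt_0 (F A : Type) [Field F] [CommRing A] [Algebra F A]
    [Module.Finite F A] [Algebra.Etale F A]
    (mul' : A → A → A)
    (h_assoc : ∀ x y z : A, mul' (mul' x y) z = mul' x (mul' y z))
    (h_comm : ∀ x y : A, mul' x y = mul' y x)
    (h_one : ∀ x : A, mul' 1 x = x)
    (h_add : ∀ x y z : A, mul' x (y + z) = mul' x y + mul' x z)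
    (h_smul : ∀ (a : F) (x y : A), mul' x (a • y) = a • mul' x y)
    (hU : ∀ x y : A, x * x * y = mul' (mul' x x) y) :
    ∀ x y : A, mul' x y = x * y := by
  -- `mul'` agrees with `*` on squares
  have mul'_self : ∀ x : A, mul' x x = x * x := by
    intro x
    have h := hU x 1
    rw [mul_one, h_comm, h_one] at h
    exact h.symm
  have key : ∀ x y : A, mul' (x * x) y = x * x * y := by
    intro x y
    have h := hU x y
    rw [mul'_self] at h
    exact h.symm
  have add_left : ∀ x y z : A, mul' (x + y) z = mul' x z + mul' y z := by
    intro x y z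
    rw [h_comm, h_add, h_comm z x, h_comm z y]
  have smul_left : ∀ (a : F) (x y : A), mul' (a • x) y = a • mul' x y := by
    intro a x y
    rw [h_comm, h_smul, h_comm]
  by_cases h2 : (2 : F) = 0
  · -- characteristic 2 case
    have hch : ∀ z : A, z + z = 0 := by
      intro z
      have h : ((2 : F)) • z = z + z := two_smul F z
      rw [h2, zero_smul] at h
      exact h.symm
    -- the subalgebra generated by squares
    set S : Subalgebra F A := Algebra.adjoin F (Set.range fun x : A => x * x) with hS
    have hsqmem : ∀ x : A, x * x ∈ S := fun x => Algebra.subset_adjoin ⟨x, rfl⟩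
    -- mul' is S-balanced in the first argument
    have Dbal : ∀ s : A, s ∈ S → ∀ a b : A, mul' (s * a) b = s * mul' a b := by
      intro s hs
      induction hs using Algebra.adjoin_induction with
      | mem x hx =>
          obtain ⟨z, rfl⟩ := hx
          intro a b
          have h1 : mul' (z * z * a) b = mul' (mul' (z * z) a) b := by rw [key]
          rw [h1, h_assoc, key]
      | algebraMap r =>
          intro a b
          rw [← Algebra.smul_def, smul_left, Algebra.smul_def]
      | add x y hx hy ihx ihy =>
          intro a b
          rw [add_mul, add_left, ihx, ihy, add_mul]
      | mul x y hx hy ihx ihy =>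
          intro a b
          rw [mul_assoc, ihx, ihy, mul_assoc]
    -- instances
    haveI : Algebra.FormallyUnramified F A := inferInstance
    haveI : Algebra.FormallyUnramified (↥S) A := Algebra.FormallyUnramified.of_restrictScalars F (↥S) A
    haveI : Module.Finite (↥S) A := Module.Finite.of_restrictScalars_finite F (↥S) A
    haveI : Algebra.EssFiniteType (↥S) A := inferInstance
    have hfg : (KaehlerDifferential.ideal (↥S) A).FG := KaehlerDifferential.ideal_fg (↥S) A
    have hsub : Subsingleton (KaehlerDifferential.ideal (↥S) A).Cotangent :=
      inferInstanceAs (Subsingleton (Ω[A⁄↥S]))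
    have hid : IsIdempotentElem (KaehlerDifferential.ideal (↥S) A) :=
      (Ideal.cotangent_subsingleton_iff _).mp hsub
    -- char 2 in the tensor product
    have hch2 : ∀ w : A ⊗[↥S] A, w + w = 0 := by
      intro w
      have h11 : ((1 : ↥S) + 1) = 0 := by
        ext
        simpa using hch 1
      calc w + w = ((1 : ↥S) + 1) • w := by rw [add_smul, one_smul]
        _ = 0 := by rw [h11, zero_smul]
    -- every element of the tensor square is congruent to its multiplication image
    have sq : ∀ ξ : A ⊗[↥S] A, ξ * ξ =
        ((Algebra.TensorProduct.lmul' (↥S) ξ) * (Algebra.TensorProduct.lmul' (↥S) ξ) : A) ⊗ₜ[↥S] 1 := by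
      intro ξ
      induction ξ using TensorProduct.induction_on with
      | zero => simp
      | tmul a b =>
          rw [Algebra.TensorProduct.tmul_mul_tmul, Algebra.TensorProduct.lmul'_apply_tmul]
          have hb : (b * b : A) = (⟨b * b, hsqmem b⟩ : ↥S) • (1 : A) := by
            rw [Subalgebra.smul_def, smul_eq_mul, mul_one]
          rw [hb, TensorProduct.tmul_smul, TensorProduct.smul_tmul', Subalgebra.smul_def,
            smul_eq_mul]
          congr 1
          ring
      | add ξ η ihξ ihη =>
          have expand : (ξ + η) * (ξ + η) = ξ * ξ + η * η + (ξ * η + η * ξ) := by ring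
          rw [expand, mul_comm η ξ, hch2 (ξ * η), add_zero, ihξ, ihη, map_add]
          have expand2 : ∀ u v : A, (u + v) * (u + v) = u * u + v * v + (u * v + u * v) := by
            intro u v; ring
          rw [expand2, hch (_ * _), add_zero, TensorProduct.add_tmul]
    -- the kernel ideal is zero
    obtain ⟨e, he, hspan⟩ := (Ideal.isIdempotentElem_iff_of_fg _ hfg).mp hid
    have heJ : e ∈ KaehlerDifferential.ideal (↥S) A := by
      rw [hspan]
      exact Submodule.mem_span_singleton_self e
    have hme : Algebra.TensorProduct.lmul' (↥S) (S := A) e = 0 := by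
      have h := heJ
      rwa [KaehlerDifferential.ideal, RingHom.mem_ker] at h
    have he0 : e = 0 := by
      have h := sq e
      rw [hme, zero_mul, TensorProduct.zero_tmul] at h
      rw [← he.eq, h]
    have hJbot : KaehlerDifferential.ideal (↥S) A = ⊥ := by
      rw [hspan, he0, Submodule.span_singleton_eq_bot.mpr rfl]
    have htmul : ∀ a b : A, (a ⊗ₜ[↥S] b : A ⊗[↥S] A) = (a * b) ⊗ₜ[↥S] 1 := by
      intro a b
      have hmem : (a ⊗ₜ[↥S] b : A ⊗[↥S] A) - (a * b) ⊗ₜ[↥S] 1 ∈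
          KaehlerDifferential.ideal (↥S) A := by
        show _ ∈ RingHom.ker _
        rw [RingHom.mem_ker, map_sub]
        show Algebra.TensorProduct.lmul' (↥S) (S := A) _ -
          Algebra.TensorProduct.lmul' (↥S) (S := A) _ = 0
        rw [Algebra.TensorProduct.lmul'_apply_tmul, Algebra.TensorProduct.lmul'_apply_tmul,
          mul_one, sub_self]
      rw [hJbot] at hmem
      exact sub_eq_zero.mp (Ideal.mem_bot.mp hmem)
    -- the bilinear difference map
    have aux : ∀ (s : ↥S) (a b : A), mul' ((s : A) * a) b = (s : A) * mul' a b :=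
      fun s => Dbal s.1 s.2
    have mk2aux1 : ∀ (s : ↥S) (a b : A),
        mul' (s • a) b - (s • a) * b = s • (mul' a b - a * b) := by
      intro s a b
      rw [Subalgebra.smul_def, smul_eq_mul, Subalgebra.smul_def, smul_eq_mul, aux]
      ring
    have mk2aux2 : ∀ (s : ↥S) (a b : A),
        mul' a (s • b) - a * (s • b) = s • (mul' a b - a * b) := by
      intro s a b
      rw [Subalgebra.smul_def, smul_eq_mul, Subalgebra.smul_def, smul_eq_mul, h_comm a, aux,
        h_comm b a]
      ring
    let Dlm : A →ₗ[↥S] A →ₗ[↥S] A := LinearMap.mk₂ (↥S) (fun a b => mul' a b - a * b)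
      (fun a a' b => by
        show mul' (a + a') b - (a + a') * b = (mul' a b - a * b) + (mul' a' b - a' * b)
        rw [add_left, add_mul]; ring)
      (fun s a b => mk2aux1 s a b)
      (fun a b b' => by
        show mul' a (b + b') - a * (b + b') = (mul' a b - a * b) + (mul' a b' - a * b')
        rw [h_add, mul_add]; ring)
      (fun s a b => mk2aux2 s a b)
    intro x y
    have h1 : TensorProduct.lift Dlm (x ⊗ₜ[↥S] y) = mul' x y - x * y := by
      rw [TensorProduct.lift.tmul]; rfl
    have h2 : TensorProduct.lift Dlm ((x * y) ⊗ₜ[↥S] (1 : A)) = 0 := by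
      rw [TensorProduct.lift.tmul]
      show mul' (x * y) 1 - x * y * 1 = 0
      rw [h_comm, h_one, mul_one, sub_self]
    rw [htmul, h2] at h1
    exact sub_eq_zero.mp h1.symm
  · -- characteristic ≠ 2 case
    intro x y
    have e := key (x + 1) y
    have lhs : (x + 1) * (x + 1) = x * x + (x + x) + 1 := by ring
    rw [lhs, add_left, add_left, key, add_left, h_one] at e
    have e' : mul' x y + mul' x y = x * y + x * y := by
      linear_combination e
    have hs : (2 : F) • (mul' x y - x * y) = 0 := by
      rw [smul_sub, two_smul, two_smul, e', sub_self]
    rcases smul_eq_zero.mp hs with h | h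
    · exact absurd h h2
    · exact sub_eq_zero.mp h
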